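/- Suppose y : [0, τ₀) → (0, ∞) is continuous, satisfies y_t + a(1-β)∫_t^{τ₀} y_s^{-γ} e^{bs} ds = w̃_t - w̃_{τ₀} for all t ∈ [0, τ₀), where w̃ is α-Hölder continuous, a > 0, and β > 1 - α (with γ = β/(1-β)). Then this leads to a contradiction; i.e., no such finite time τ₀ ∈ [0, T] at which y hits 0 can exist. -/

import Mathlib

open Real Set MeasureTheory

/-- Non-explosion: when `β > 1 - α`, there is no finite time `τ₀ ∈ [0,T]` at which a
positive continuous solution of `y_t + a(1-β)∫_t^{τ₀} y_s^{-γ}e^{bs}ds = w̃_t - w̃_{τ₀}`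
can hit `0`. -/
theorem stmt_6 (T a b α β γ τ₀ C : ℝ) (y w : ℝ → ℝ)
    (hT : 0 < T) (ha : 0 < a) (hb : 0 ≤ b)
    (hα : α ∈ Set.Ioc (0 : ℝ) 1) (hβ : β ∈ Set.Ioc (1 - α) 1) (hβ1 : β < 1)
    (hγ : γ = β / (1 - β))
    (hτ₀ : τ₀ ∈ Set.Ioc (0 : ℝ) T)
    (hC : 0 ≤ C)
    (hwHol : ∀ s ∈ Set.Icc (0 : ℝ) T, ∀ t ∈ Set.Icc (0 : ℝ) T,
      |w t - w s| ≤ C * |t - s| ^ α)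
    (hyc : ContinuousOn y (Set.Ico 0 τ₀))
    (hypos : ∀ t ∈ Set.Ico (0 : ℝ) τ₀, 0 < y t)
    (hint : ∀ t ∈ Set.Ico (0 : ℝ) τ₀,
      IntegrableOn (fun s => (y s) ^ (-γ) * Real.exp (b * s)) (Set.Ioo t τ₀))
    (heq : ∀ t ∈ Set.Ico (0 : ℝ) τ₀,
      y t + a * (1 - β) * (∫ s in Set.Ioo t τ₀, (y s) ^ (-γ) * Real.exp (b * s))
        = w t - w τ₀) :
    False := by
  obtain ⟨hα0, hα1⟩ := hα
  obtain ⟨hβlo, hβhi⟩ := hβ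
  obtain ⟨hτ0, hτT⟩ := hτ₀
  have h1β : 0 < 1 - β := by linarith
  have hβ0 : 0 < β := by linarith
  have hγ0 : 0 < γ := hγ ▸ div_pos hβ0 h1β
  -- the Hölder bound on y
  have hybd : ∀ t ∈ Set.Ico (0 : ℝ) τ₀, y t ≤ C * (τ₀ - t) ^ α := by
    intro t ht
    obtain ⟨ht0, htτ⟩ := ht
    have hInt0 : 0 ≤ ∫ s in Set.Ioo t τ₀, (y s) ^ (-γ) * Real.exp (b * s) := by
      apply MeasureTheory.setIntegral_nonneg measurableSet_Ioo
      intro s hs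
      have hys : 0 < y s := hypos s ⟨by linarith [hs.1], hs.2⟩
      positivity
    have hw := hwHol τ₀ ⟨le_of_lt hτ0, hτT⟩ t ⟨ht0, by linarith⟩
    have habs : |t - τ₀| = τ₀ - t := by rw [abs_of_nonpos (by linarith)]; ring
    rw [habs] at hw
    have := heq t ⟨ht0, htτ⟩
    have hwle : w t - w τ₀ ≤ C * (τ₀ - t) ^ α :=
      le_trans (le_abs_self _) hw
    nlinarith [mul_nonneg (mul_nonneg ha.le h1β.le) hInt0]
  -- C must be positive
  have hC0 : 0 < C := by
    by_contra hc
    push_neg at hc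
    have h0 : (0:ℝ) ∈ Set.Ico (0:ℝ) τ₀ := ⟨le_refl _, hτ0⟩
    have := hybd 0 h0
    have hy0 := hypos 0 h0
    have hpow : (0:ℝ) < (τ₀ - 0) ^ α := Real.rpow_pos_of_pos (by linarith) α
    nlinarith [mul_nonpos_of_nonpos_of_nonneg hc hpow.le]
  -- key exponent
  set δ : ℝ := α * γ + α - 1 with hδdef
  have hδ : 0 < δ := by
    have : α * γ = α * β / (1 - β) := by rw [hγ]; ring
    have h2 : α * γ + α - 1 = (α + β - 1) / (1 - β) := by
      rw [this]; field_simp; ring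
    rw [hδdef, h2]
    exact div_pos (by linarith) h1β
  set K : ℝ := a * (1 - β) * C ^ (-γ) with hKdef
  have hK : 0 < K := by
    have : (0:ℝ) < C ^ (-γ) := Real.rpow_pos_of_pos hC0 _
    positivity
  -- choose ε
  set ε : ℝ := min τ₀ ((K / (2 * C)) ^ δ⁻¹) with hεdef
  have hKC : 0 < K / (2 * C) := by positivity
  have hε : 0 < ε := lt_min hτ0 (Real.rpow_pos_of_pos hKC _)
  have hετ : ε ≤ τ₀ := min_le_left _ _
  have hεδ : ε ^ δ ≤ K / (2 * C) := by
    have h1 : ε ^ δ ≤ ((K / (2 * C)) ^ δ⁻¹) ^ δ :=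
      Real.rpow_le_rpow hε.le (min_le_right _ _) hδ.le
    rwa [Real.rpow_inv_rpow hKC.le hδ.ne'] at h1
  set t : ℝ := τ₀ - ε with htdef
  have ht : t ∈ Set.Ico (0:ℝ) τ₀ := ⟨by simp [htdef]; linarith, by simp [htdef]; linarith⟩
  have hτt : τ₀ - t = ε := by simp [htdef]
  -- upper bound on the integral term
  have hy0 := hypos t ht
  have h1 : a * (1 - β) * (∫ s in Set.Ioo t τ₀, (y s) ^ (-γ) * Real.exp (b * s))
      ≤ C * ε ^ α := by
    have := heq t ht
    have hw := hwHol τ₀ ⟨le_of_lt hτ0, hτT⟩ t ⟨ht.1, by linarith [ht.2]⟩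
    have habs : |t - τ₀| = τ₀ - t := by rw [abs_of_nonpos (by linarith [ht.2])]; ring
    rw [habs, hτt] at hw
    have hwle : w t - w τ₀ ≤ C * ε ^ α := le_trans (le_abs_self _) hw
    linarith
  -- lower bound on the integral term
  have h2 : (C * ε ^ α) ^ (-γ) * ε
      ≤ ∫ s in Set.Ioo t τ₀, (y s) ^ (-γ) * Real.exp (b * s) := by
    have hmeas := MeasureTheory.setIntegral_ge_of_const_le (c := (C * ε ^ α) ^ (-γ))
      (measurableSet_Ioo (a := t) (b := τ₀))
      (by simp [Real.volume_Ioo])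
      (fun s hs => by
        have hs1 : s ∈ Set.Ico (0:ℝ) τ₀ := ⟨by linarith [hs.1, ht.1], hs.2⟩
        have hys : 0 < y s := hypos s hs1
        have hys2 : y s ≤ C * ε ^ α := by
          have hb1 : y s ≤ C * (τ₀ - s) ^ α := hybd s hs1
          have hb2 : (τ₀ - s) ^ α ≤ ε ^ α := by
            apply Real.rpow_le_rpow (by linarith [hs.2]) _ hα0.le
            rw [← hτt]; linarith [hs.1]
          nlinarith
        have hrp : (C * ε ^ α) ^ (-γ) ≤ (y s) ^ (-γ) :=
          Real.rpow_le_rpow_of_nonpos hys hys2 (by linarith)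
        have hexp : (1:ℝ) ≤ Real.exp (b * s) := by
          have : 0 ≤ b * s := mul_nonneg hb (by linarith [hs.1, ht.1])
          nlinarith [Real.add_one_le_exp (b * s)]
        calc (C * ε ^ α) ^ (-γ) = (C * ε ^ α) ^ (-γ) * 1 := by ring
          _ ≤ (y s) ^ (-γ) * Real.exp (b * s) :=
            mul_le_mul hrp hexp zero_le_one (Real.rpow_nonneg hys.le _))
      (hint t ht)
    calc (C * ε ^ α) ^ (-γ) * ε
        = (C * ε ^ α) ^ (-γ) * (volume (Set.Ioo t τ₀)).toReal := by
          rw [Real.volume_Ioo, hτt, ENNReal.toReal_ofReal hε.le]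
      _ ≤ _ := by rw [smul_eq_mul, measureReal_def, mul_comm] at hmeas; exact hmeas
  -- combine
  have h3 : a * (1 - β) * ((C * ε ^ α) ^ (-γ) * ε) ≤ C * ε ^ α := by
    have hstep := mul_le_mul_of_nonneg_left h2 (by positivity : (0:ℝ) ≤ a * (1 - β))
    linarith
  -- rewrite powers
  have hεα : (0:ℝ) < ε ^ α := Real.rpow_pos_of_pos hε _
  have hsplit : (C * ε ^ α) ^ (-γ) = C ^ (-γ) * ε ^ (-(α * γ)) := by
    rw [Real.mul_rpow hC0.le hεα.le, ← Real.rpow_mul hε.le, mul_neg]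
  have hεpow : ε ^ α = ε ^ δ * (ε ^ (-(α * γ)) * ε) := by
    have h := Real.rpow_add hε (δ + -(α * γ)) 1
    rw [Real.rpow_add hε δ (-(α * γ)), Real.rpow_one] at h
    have hexps : α = δ + -(α * γ) + 1 := by rw [hδdef]; ring
    conv_lhs => rw [hexps]
    rw [h]; ring
  rw [hsplit] at h3
  have hpos : (0:ℝ) < ε ^ (-(α * γ)) * ε := by
    have := Real.rpow_pos_of_pos hε (-(α * γ)); positivity
  have h4 : K * (ε ^ (-(α * γ)) * ε) ≤ C * ε ^ δ * (ε ^ (-(α * γ)) * ε) := by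
    calc K * (ε ^ (-(α * γ)) * ε) = a * (1 - β) * (C ^ (-γ) * ε ^ (-(α * γ)) * ε) := by
          rw [hKdef]; ring
      _ ≤ C * ε ^ α := h3
      _ = C * ε ^ δ * (ε ^ (-(α * γ)) * ε) := by rw [hεpow]; ring
  have h5 : K ≤ C * ε ^ δ := le_of_mul_le_mul_right h4 hpos
  have h6 : C * ε ^ δ ≤ C * (K / (2 * C)) := mul_le_mul_of_nonneg_left hεδ hC0.le
  have h7 : C * (K / (2 * C)) = K / 2 := by field_simp
  linarith
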